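/- For n ≥ 4, the maximal subsets E' of edges of K_n containing no 4 edges that form a subgraph of maximum degree ≤ 2 are exactly: (a) the edge sets consisting of a star K_{1,n-1} plus one extra edge, and (b) sets of exactly three pairwise disjoint edges. -/

import Mathlib

open Finset

/-- `noBad E` says that the edge set `E` of a graph on `[n]` contains no `4`
distinct edges forming a subgraph of maximum degree at most `2`. -/
def noBad (n : ℕ) (E : Finset (Finset (Fin n))) : Prop :=
  ¬ ∃ A : Fin 4 → Finset (Fin n), (∀ j, A j ∈ E) ∧ Function.Injective A ∧
      ∀ v : Fin n, (Finset.univ.filter fun j => v ∈ A j).card ≤ 2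

lemma noBad_of_card_le_three {n : ℕ} {E : Finset (Finset (Fin n))} (h : E.card ≤ 3) :
    noBad n E := by
  rintro ⟨A, hA, hinj, -⟩
  have h4 : (Finset.univ.image A).card = 4 := by
    rw [Finset.card_image_of_injective _ hinj, Finset.card_univ, Fintype.card_fin]
  have hsub : Finset.univ.image A ⊆ E := by
    intro x hx
    simp only [Finset.mem_image] at hx
    obtain ⟨j, -, rfl⟩ := hx
    exact hA j
  have := Finset.card_le_card hsub
  omega

lemma noBad_star {n : ℕ} {v : Fin n} {e : Finset (Fin n)} {E : Finset (Finset (Fin n))}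
    (hE : ∀ g ∈ E, v ∈ g ∨ g = e) : noBad n E := by
  rintro ⟨A, hA, hinj, hdeg⟩
  have key := hdeg v
  have hsplit := Finset.card_filter_add_card_filter_not
    (s := (Finset.univ : Finset (Fin 4))) (p := fun j => v ∈ A j)
  have hone : (Finset.univ.filter fun j => ¬ v ∈ A j).card ≤ 1 := by
    apply Finset.card_le_one.mpr
    intro a ha b hb
    simp only [Finset.mem_filter] at ha hb
    have hae : A a = e := (hE _ (hA a)).resolve_left ha.2
    have hbe : A b = e := (hE _ (hA b)).resolve_left hb.2
    exact hinj (hae.trans hbe.symm)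
  simp only [Finset.card_univ, Fintype.card_fin] at hsplit
  omega

lemma filter_fin4_card_le_two (p : Fin 4 → Prop) [DecidablePred p]
    (h012 : ¬(p 0 ∧ p 1 ∧ p 2)) (h013 : ¬(p 0 ∧ p 1 ∧ p 3))
    (h023 : ¬(p 0 ∧ p 2 ∧ p 3)) (h123 : ¬(p 1 ∧ p 2 ∧ p 3)) :
    (Finset.univ.filter p).card ≤ 2 := by
  have huniv : (Finset.univ : Finset (Fin 4)) = {0, 1, 2, 3} := by decide
  rw [huniv]
  by_cases h0 : p 0 <;> by_cases h1 : p 1 <;> by_cases h2 : p 2 <;> by_cases h3 : p 3 <;>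
    simp_all [Finset.filter_insert, Finset.filter_singleton]

lemma three_in_filter {p : Fin 4 → Prop} [DecidablePred p] {j₁ j₂ j₃ : Fin 4}
    (h12 : j₁ ≠ j₂) (h13 : j₁ ≠ j₃) (h23 : j₂ ≠ j₃)
    (hp1 : p j₁) (hp2 : p j₂) (hp3 : p j₃) :
    3 ≤ (Finset.univ.filter p).card := by
  have hsub : ({j₁, j₂, j₃} : Finset (Fin 4)) ⊆ Finset.univ.filter p := by
    intro x hx
    simp only [Finset.mem_insert, Finset.mem_singleton] at hx
    rcases hx with rfl | rfl | rfl <;> simp [hp1, hp2, hp3]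
  have hc : ({j₁, j₂, j₃} : Finset (Fin 4)).card = 3 := by
    rw [Finset.card_insert_of_notMem (by simp [h12, h13]),
      Finset.card_insert_of_notMem (by simp [h23]), Finset.card_singleton]
  exact hc ▸ Finset.card_le_card hsub

lemma not_noBad_of_four {n : ℕ} {E : Finset (Finset (Fin n))} {a b c d : Finset (Fin n)}
    (ha : a ∈ E) (hb : b ∈ E) (hc : c ∈ E) (hd : d ∈ E)
    (hab : a ≠ b) (hac : a ≠ c) (had : a ≠ d) (hbc : b ≠ c) (hbd : b ≠ d) (hcd : c ≠ d)
    (habc : ∀ u : Fin n, ¬(u ∈ a ∧ u ∈ b ∧ u ∈ c))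
    (habd : ∀ u : Fin n, ¬(u ∈ a ∧ u ∈ b ∧ u ∈ d))
    (hacd : ∀ u : Fin n, ¬(u ∈ a ∧ u ∈ c ∧ u ∈ d))
    (hbcd : ∀ u : Fin n, ¬(u ∈ b ∧ u ∈ c ∧ u ∈ d)) : ¬ noBad n E := by
  intro hnb
  apply hnb
  refine ⟨![a, b, c, d], ?_, ?_, ?_⟩
  · intro j; fin_cases j <;> simpa
  · intro i j hij
    fin_cases i <;> fin_cases j <;> simp_all
  · intro u
    apply filter_fin4_card_le_two
    · simpa using habc u
    · simpa using habd u
    · simpa using hacd u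
    · simpa using hbcd u

lemma inter_card_le_one {α : Type*} [DecidableEq α] {e f : Finset α}
    (he : e.card = 2) (hf : f.card = 2) (hef : e ≠ f) : (e ∩ f).card ≤ 1 := by
  by_contra h
  push_neg at h
  have h1 : e ∩ f = e := Finset.eq_of_subset_of_card_le (Finset.inter_subset_left) (by omega)
  have h2 : e ∩ f = f := Finset.eq_of_subset_of_card_le (Finset.inter_subset_right) (by omega)
  exact hef (h1.symm.trans h2)

lemma eq_pair {α : Type*} [DecidableEq α] {e : Finset α} (h2 : e.card = 2) {v : α}
    (hv : v ∈ e) : ∃ w, w ≠ v ∧ e = {v, w} := by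
  obtain ⟨x, y, hxy, rfl⟩ := Finset.card_eq_two.mp h2
  rcases Finset.mem_insert.mp hv with rfl | hv'
  · exact ⟨y, fun h => hxy h.symm, rfl⟩
  · rcases Finset.mem_singleton.mp hv' with rfl
    exact ⟨x, hxy, Finset.pair_comm x v⟩

lemma bad_core {n : ℕ} {E : Finset (Finset (Fin n))} {v w₁ w₂ : Fin n}
    {e f : Finset (Fin n)}
    (he : e ∈ E) (hf : f ∈ E) (hef : e ≠ f) (hve : v ∉ e) (hvf : v ∉ f)
    (hs1 : ({v, w₁} : Finset (Fin n)) ∈ E) (hs2 : ({v, w₂} : Finset (Fin n)) ∈ E)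
    (h12 : w₁ ≠ w₂) (h1v : w₁ ≠ v) (h2v : w₂ ≠ v)
    (h1 : w₁ ∉ e ∩ f) (h2 : w₂ ∉ e ∩ f) : ¬ noBad n E := by
  refine not_noBad_of_four he hf hs1 hs2 hef ?_ ?_ ?_ ?_ ?_ ?_ ?_ ?_ ?_
  · intro h; rw [h] at hve; simp at hve
  · intro h; rw [h] at hve; simp at hve
  · intro h; rw [h] at hvf; simp at hvf
  · intro h; rw [h] at hvf; simp at hvf
  · intro h
    have : w₂ ∈ ({v, w₁} : Finset (Fin n)) := h ▸ by simp
    simp only [Finset.mem_insert, Finset.mem_singleton] at this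
    rcases this with h' | h' <;> [exact h2v h'; exact h12 h'.symm]
  · intro u ⟨hue, huf, hus⟩
    simp only [Finset.mem_insert, Finset.mem_singleton] at hus
    rcases hus with rfl | rfl
    · exact hve hue
    · exact h1 (Finset.mem_inter.mpr ⟨hue, huf⟩)
  · intro u ⟨hue, huf, hus⟩
    simp only [Finset.mem_insert, Finset.mem_singleton] at hus
    rcases hus with rfl | rfl
    · exact hve hue
    · exact h2 (Finset.mem_inter.mpr ⟨hue, huf⟩)
  · intro u ⟨hue, hus1, hus2⟩
    simp only [Finset.mem_insert, Finset.mem_singleton] at hus1 hus2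
    rcases hus1 with rfl | rfl
    · exact hve hue
    · rcases hus2 with h' | h' <;> [exact h1v h'; exact h12 h']
  · intro u ⟨huf, hus1, hus2⟩
    simp only [Finset.mem_insert, Finset.mem_singleton] at hus1 hus2
    rcases hus1 with rfl | rfl
    · exact hvf huf
    · rcases hus2 with h' | h' <;> [exact h1v h'; exact h12 h']

/-- For `n ≥ 4`, a set `E'` of edges of `K_n` is maximal with the property of
containing no `4` edges that form a subgraph of maximum degree `≤ 2` **iff**
it is either (a) a star `K_{1,n-1}` plus one extra edge (not incident to the
star's center), or (b) a set of exactly three pairwise disjoint edges. -/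
theorem maximal_noBad_characterization (n : ℕ) (hn : 4 ≤ n)
    (E' : Finset (Finset (Fin n))) (hE : ∀ e ∈ E', e.card = 2) :
    (noBad n E' ∧ ∀ f : Finset (Fin n), f.card = 2 → f ∉ E' →
        ¬ noBad n (insert f E'))
    ↔ ((∃ v : Fin n, ∃ e : Finset (Fin n), e.card = 2 ∧ v ∉ e ∧
          E' = ((Finset.univ.erase v).image fun w => ({v, w} : Finset (Fin n))) ∪ {e}) ∨
        (∃ e₁ e₂ e₃ : Finset (Fin n), e₁.card = 2 ∧ e₂.card = 2 ∧ e₃.card = 2 ∧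
          Disjoint e₁ e₂ ∧ Disjoint e₁ e₃ ∧ Disjoint e₂ e₃ ∧
          E' = {e₁, e₂, e₃})) := by
  have hcerase : ∀ u : Fin n, (Finset.univ.erase u).card = n - 1 := by
    intro u
    rw [Finset.card_erase_of_mem (Finset.mem_univ u), Finset.card_univ, Fintype.card_fin]
  constructor
  · rintro ⟨hnb, hmax⟩
    by_cases hcard : E'.card ≤ 3
    -- ================== small case : three disjoint edges ==================
    · right
      -- first, E' has exactly 3 elements
      have hex : ∃ f : Finset (Fin n), f.card = 2 ∧ f ∉ E' := by
        have hP : E'.card < ((Finset.univ : Finset (Fin n)).powersetCard 2).card := by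
          rw [Finset.card_powersetCard, Finset.card_univ, Fintype.card_fin]
          have : Nat.choose 4 2 ≤ Nat.choose n 2 := Nat.choose_le_choose 2 hn
          simp [Nat.choose] at this
          omega
        have hns : ¬ ((Finset.univ : Finset (Fin n)).powersetCard 2) ⊆ E' := by
          intro hsub
          exact absurd (Finset.card_le_card hsub) (by omega)
        obtain ⟨f, hfP, hfE⟩ := Finset.not_subset.mp hns
        exact ⟨f, (Finset.mem_powersetCard.mp hfP).2, hfE⟩
      have h3 : E'.card = 3 := by
        by_contra h
        obtain ⟨f, hf2, hfE⟩ := hex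
        apply hmax f hf2 hfE
        apply noBad_of_card_le_three
        have := Finset.card_insert_le f E'
        omega
      -- pairwise disjointness of all pairs in E'
      have hdisj : ∀ a b : Finset (Fin n), a ∈ E' → b ∈ E' → a ≠ b → Disjoint a b := by
        intro a b haE hbE hab
        rw [Finset.disjoint_left]
        intro u hua hub
        by_cases hstar : ∀ w ∈ Finset.univ.erase u, ({u, w} : Finset (Fin n)) ∈ E'
        · -- all star edges at u are in E' : then n = 4 and E' is the star at u
          have himg : (Finset.univ.erase u).image (fun w => ({u, w} : Finset (Fin n))) ⊆ E' := by
            intro g hg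
            simp only [Finset.mem_image] at hg
            obtain ⟨w, hw, rfl⟩ := hg
            exact hstar w hw
          have hinjw : Set.InjOn (fun w => ({u, w} : Finset (Fin n)))
              (Finset.univ.erase u) := by
            intro x hx y hy hxy
            simp only [Finset.coe_erase, Set.mem_diff, Finset.mem_coe,
              Finset.mem_singleton] at hx hy
            change ({u, x} : Finset (Fin n)) = {u, y} at hxy
            have : y ∈ ({u, x} : Finset (Fin n)) := by rw [hxy]; simp
            simp only [Finset.mem_insert, Finset.mem_singleton] at this
            rcases this with h' | h'
            · exact absurd h' hy.2
            · exact h'.symm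
          have hcImg : ((Finset.univ.erase u).image
              (fun w => ({u, w} : Finset (Fin n)))).card = n - 1 := by
            rw [Finset.card_image_of_injOn hinjw, hcerase]
          have hle : E'.card ≤ ((Finset.univ.erase u).image
              (fun w => ({u, w} : Finset (Fin n)))).card := by
            have := Finset.card_le_card himg
            omega
          have hEeq : E' = (Finset.univ.erase u).image
              (fun w => ({u, w} : Finset (Fin n))) :=
            (Finset.eq_of_subset_of_card_le himg hle).symm
          have hallu : ∀ g ∈ E', u ∈ g := by
            intro g hg
            rw [hEeq] at hg
            simp only [Finset.mem_image] at hg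
            obtain ⟨w, -, rfl⟩ := hg
            simp
          obtain ⟨a', ha', b', hb', hab'⟩ := Finset.one_lt_card.mp
            (show 1 < (Finset.univ.erase u).card by rw [hcerase]; omega)
          simp only [Finset.mem_erase, Finset.mem_univ, and_true] at ha' hb'
          have hf2 : ({a', b'} : Finset (Fin n)).card = 2 := Finset.card_pair hab'
          have hunotf : u ∉ ({a', b'} : Finset (Fin n)) := by
            simp only [Finset.mem_insert, Finset.mem_singleton]
            rintro (rfl | rfl)
            · exact ha' rfl
            · exact hb' rfl
          have hfE : ({a', b'} : Finset (Fin n)) ∉ E' := fun h => hunotf (hallu _ h)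
          apply hmax _ hf2 hfE
          apply noBad_star (v := u) (e := ({a', b'} : Finset (Fin n)))
          intro g hg
          rcases Finset.mem_insert.mp hg with rfl | hg
          · right; rfl
          · left; exact hallu g hg
        · push_neg at hstar
          obtain ⟨w, hw, hwE⟩ := hstar
          simp only [Finset.mem_erase, Finset.mem_univ, and_true] at hw
          have hf2 : ({u, w} : Finset (Fin n)).card = 2 := Finset.card_pair (Ne.symm hw)
          have hbad := hmax _ hf2 hwE
          rw [noBad, not_not] at hbad
          obtain ⟨A, hA, hinj, hdeg⟩ := hbad
          have hci : (insert ({u, w} : Finset (Fin n)) E').card = 4 := by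
            rw [Finset.card_insert_of_notMem hwE, h3]
          have himA : Finset.univ.image A = insert ({u, w} : Finset (Fin n)) E' := by
            apply Finset.eq_of_subset_of_card_le
            · intro x hx
              simp only [Finset.mem_image] at hx
              obtain ⟨j, -, rfl⟩ := hx
              exact hA j
            · rw [hci, Finset.card_image_of_injective _ hinj, Finset.card_univ,
                Fintype.card_fin]
          have hget : ∀ g ∈ insert ({u, w} : Finset (Fin n)) E', ∃ j, A j = g := by
            intro g hg
            rw [← himA] at hg
            simp only [Finset.mem_image] at hg
            obtain ⟨j, -, rfl⟩ := hg
            exact ⟨j, rfl⟩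
          obtain ⟨jf, hjf⟩ := hget _ (Finset.mem_insert_self _ _)
          obtain ⟨ja, hja⟩ := hget a (Finset.mem_insert_of_mem haE)
          obtain ⟨jb, hjb⟩ := hget b (Finset.mem_insert_of_mem hbE)
          have hfa : ({u, w} : Finset (Fin n)) ≠ a := fun h => hwE (h ▸ haE)
          have hfb : ({u, w} : Finset (Fin n)) ≠ b := fun h => hwE (h ▸ hbE)
          have hjfa : jf ≠ ja := fun h => hfa (by rw [← hjf, ← hja, h])
          have hjfb : jf ≠ jb := fun h => hfb (by rw [← hjf, ← hjb, h])
          have hjab : ja ≠ jb := fun h => hab (by rw [← hja, ← hjb, h])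
          have := three_in_filter (p := fun j => u ∈ A j) hjfa hjfb hjab
            (by show u ∈ A jf; rw [hjf]; simp)
            (by show u ∈ A ja; rw [hja]; exact hua)
            (by show u ∈ A jb; rw [hjb]; exact hub)
          have := hdeg u
          omega
      obtain ⟨e₁, e₂, e₃, h12, h13, h23, hE3⟩ := Finset.card_eq_three.mp h3
      have he1 : e₁ ∈ E' := by rw [hE3]; simp
      have he2 : e₂ ∈ E' := by rw [hE3]; simp
      have he3 : e₃ ∈ E' := by rw [hE3]; simp
      exact ⟨e₁, e₂, e₃, hE _ he1, hE _ he2, hE _ he3,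
        hdisj _ _ he1 he2 h12, hdisj _ _ he1 he3 h13, hdisj _ _ he2 he3 h23, hE3⟩
    -- ================== big case : star plus edge ==================
    · left
      push_neg at hcard
      -- find a vertex v with three distinct star edges in E'
      obtain ⟨t, htE, ht4⟩ := Finset.exists_subset_card_eq (s := E') (n := 4) (by omega)
      set A : Fin 4 → Finset (Fin n) :=
        fun j => ((Finset.equivFinOfCardEq ht4).symm j : Finset (Fin n)) with hAdef
      have hAmem : ∀ j, A j ∈ E' := fun j =>
        htE ((Finset.equivFinOfCardEq ht4).symm j).2
      have hAinj : Function.Injective A :=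
        Subtype.val_injective.comp (Finset.equivFinOfCardEq ht4).symm.injective
      have hv : ∃ v : Fin n, 2 < (Finset.univ.filter fun j => v ∈ A j).card := by
        by_contra h
        push_neg at h
        exact hnb ⟨A, hAmem, hAinj, h⟩
      obtain ⟨v, hv⟩ := hv
      obtain ⟨j₁, hj1, j₂, hj2, j₃, hj3, hj12, hj13, hj23⟩ := Finset.two_lt_card.mp hv
      simp only [Finset.mem_filter, Finset.mem_univ, true_and] at hj1 hj2 hj3
      obtain ⟨w₁, hw1v, hs1⟩ := eq_pair (hE _ (hAmem j₁)) hj1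
      obtain ⟨w₂, hw2v, hs2⟩ := eq_pair (hE _ (hAmem j₂)) hj2
      obtain ⟨w₃, hw3v, hs3⟩ := eq_pair (hE _ (hAmem j₃)) hj3
      have hs1E : ({v, w₁} : Finset (Fin n)) ∈ E' := hs1 ▸ hAmem j₁
      have hs2E : ({v, w₂} : Finset (Fin n)) ∈ E' := hs2 ▸ hAmem j₂
      have hs3E : ({v, w₃} : Finset (Fin n)) ∈ E' := hs3 ▸ hAmem j₃
      have hwne : ∀ {x y : Fin n}, x ≠ v → ({v, x} : Finset (Fin n)) = {v, y} → x = y := by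
        intro x y hxv hxy
        have : x ∈ ({v, y} : Finset (Fin n)) := hxy ▸ by simp
        simp only [Finset.mem_insert, Finset.mem_singleton] at this
        exact this.resolve_left hxv
      have hw12 : w₁ ≠ w₂ := fun h =>
        hj12 (hAinj (by rw [hs1, hs2, h]))
      have hw13 : w₁ ≠ w₃ := fun h =>
        hj13 (hAinj (by rw [hs1, hs3, h]))
      have hw23 : w₂ ≠ w₃ := fun h =>
        hj23 (hAinj (by rw [hs2, hs3, h]))
      -- at most one edge of E' avoids v
      have hC : ∀ g ∈ E', v ∉ g → ∀ h ∈ E', v ∉ h → g = h := by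
        intro g hg hvg h hh hvh
        by_contra hgh
        have hint : (g ∩ h).card ≤ 1 := inter_card_le_one (hE _ hg) (hE _ hh) hgh
        have honly : ∀ {x y : Fin n}, x ∈ g ∩ h → y ∈ g ∩ h → x = y :=
          fun hx hy => Finset.card_le_one.mp hint _ hx _ hy
        by_cases hm1 : w₁ ∈ g ∩ h
        · have hm2 : w₂ ∉ g ∩ h := fun h' => hw12 (honly hm1 h')
          have hm3 : w₃ ∉ g ∩ h := fun h' => hw13 (honly hm1 h')
          exact bad_core hg hh hgh hvg hvh hs2E hs3E hw23 hw2v hw3v hm2 hm3 hnb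
        · by_cases hm2 : w₂ ∈ g ∩ h
          · have hm3 : w₃ ∉ g ∩ h := fun h' => hw23 (honly hm2 h')
            exact bad_core hg hh hgh hvg hvh hs1E hs3E hw13 hw1v hw3v hm1 hm3 hnb
          · exact bad_core hg hh hgh hvg hvh hs1E hs2E hw12 hw1v hw2v hm1 hm2 hnb
      by_cases hall : ∀ g ∈ E', v ∈ g
      · -- impossible: we could add an edge avoiding v
        exfalso
        obtain ⟨a', ha', b', hb', hab'⟩ := Finset.one_lt_card.mp
          (show 1 < (Finset.univ.erase v).card by rw [hcerase]; omega)
        simp only [Finset.mem_erase, Finset.mem_univ, and_true] at ha' hb'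
        have hvnotf : v ∉ ({a', b'} : Finset (Fin n)) := by
          simp only [Finset.mem_insert, Finset.mem_singleton]
          rintro (rfl | rfl)
          · exact ha' rfl
          · exact hb' rfl
        have hfE : ({a', b'} : Finset (Fin n)) ∉ E' := fun h => hvnotf (hall _ h)
        apply hmax _ (Finset.card_pair hab') hfE
        apply noBad_star (v := v) (e := ({a', b'} : Finset (Fin n)))
        intro g hg
        rcases Finset.mem_insert.mp hg with rfl | hg
        · right; rfl
        · left; exact hall g hg
      · push_neg at hall
        obtain ⟨e, heE, hve⟩ := hall
        refine ⟨v, e, hE _ heE, hve, ?_⟩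
        ext g
        simp only [Finset.mem_union, Finset.mem_image, Finset.mem_erase, Finset.mem_univ,
          and_true, Finset.mem_singleton]
        constructor
        · intro hg
          by_cases hvg : v ∈ g
          · obtain ⟨w, hwv, rfl⟩ := eq_pair (hE _ hg) hvg
            exact Or.inl ⟨w, hwv, rfl⟩
          · exact Or.inr (hC g hg hvg e heE hve)
        · rintro (⟨w, hwv, rfl⟩ | rfl)
          · by_contra hng
            apply hmax _ (Finset.card_pair (Ne.symm hwv)) hng
            apply noBad_star (v := v) (e := e)
            intro g' hg'
            rcases Finset.mem_insert.mp hg' with rfl | hg'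
            · left; simp
            · by_cases hv' : v ∈ g'
              · exact Or.inl hv'
              · exact Or.inr (hC g' hg' hv' e heE hve)
          · exact heE
  -- ================== reverse direction ==================
  · rintro (⟨v, e, he2, hve, rfl⟩ | ⟨e₁, e₂, e₃, h1, h2, h3, d12, d13, d23, rfl⟩)
    · -- star plus edge
      have hstar : ∀ w : Fin n, w ≠ v →
          ({v, w} : Finset (Fin n)) ∈
            ((Finset.univ.erase v).image fun w => ({v, w} : Finset (Fin n))) ∪ {e} := by
        intro w hwv
        apply Finset.mem_union_left
        exact Finset.mem_image.mpr ⟨w, by simp [hwv], rfl⟩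
      have heE : e ∈ ((Finset.univ.erase v).image
          fun w => ({v, w} : Finset (Fin n))) ∪ {e} := by
        apply Finset.mem_union_right; simp
      constructor
      · apply noBad_star (v := v) (e := e)
        intro g hg
        rcases Finset.mem_union.mp hg with hg | hg
        · simp only [Finset.mem_image] at hg
          obtain ⟨w, -, rfl⟩ := hg
          left; simp
        · right; exact Finset.mem_singleton.mp hg
      · intro f hf2 hfE hnbI
        have hvf : v ∉ f := by
          intro hvf
          obtain ⟨w, hwv, rfl⟩ := eq_pair hf2 hvf
          exact hfE (hstar w hwv)
        have hef : e ≠ f := fun h => hfE (h ▸ heE)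
        have hint : (e ∩ f).card ≤ 1 := inter_card_le_one he2 hf2 hef
        have hs : 1 < ((Finset.univ.erase v) \ (e ∩ f)).card := by
          have h1 := Finset.le_card_sdiff (e ∩ f) (Finset.univ.erase v)
          rw [hcerase] at h1
          omega
        obtain ⟨w₁, hw1, w₂, hw2, hw12⟩ := Finset.one_lt_card.mp hs
        simp only [Finset.mem_sdiff, Finset.mem_erase, Finset.mem_univ, and_true] at hw1 hw2
        exact bad_core (E := insert f (((Finset.univ.erase v).image
            fun w => ({v, w} : Finset (Fin n))) ∪ {e}))
          (Finset.mem_insert_of_mem heE) (Finset.mem_insert_self _ _) hef hve hvf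
          (Finset.mem_insert_of_mem (hstar w₁ hw1.1))
          (Finset.mem_insert_of_mem (hstar w₂ hw2.1))
          hw12 hw1.1 hw2.1 hw1.2 hw2.2 hnbI
    · -- three disjoint edges
      have hne12 : e₁ ≠ e₂ := by
        rintro rfl
        rw [disjoint_self] at d12
        rw [d12] at h1
        simp at h1
      have hne13 : e₁ ≠ e₃ := by
        rintro rfl
        rw [disjoint_self] at d13
        rw [d13] at h1
        simp at h1
      have hne23 : e₂ ≠ e₃ := by
        rintro rfl
        rw [disjoint_self] at d23
        rw [d23] at h2
        simp at h2
      constructor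
      · apply noBad_of_card_le_three
        calc ({e₁, e₂, e₃} : Finset (Finset (Fin n))).card
            ≤ ({e₂, e₃} : Finset (Finset (Fin n))).card + 1 := Finset.card_insert_le _ _
          _ ≤ (({e₃} : Finset (Finset (Fin n))).card + 1) + 1 := by
              have := Finset.card_insert_le e₂ ({e₃} : Finset (Finset (Fin n)))
              omega
          _ ≤ 3 := by simp
      · intro f hf2 hfE hnbI
        have hfe1 : f ≠ e₁ := fun h => hfE (by rw [h]; simp)
        have hfe2 : f ≠ e₂ := fun h => hfE (by rw [h]; simp)
        have hfe3 : f ≠ e₃ := fun h => hfE (by rw [h]; simp)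
        refine not_noBad_of_four (a := f) (b := e₁) (c := e₂) (d := e₃)
          (Finset.mem_insert_self _ _)
          (Finset.mem_insert_of_mem (by simp)) (Finset.mem_insert_of_mem (by simp))
          (Finset.mem_insert_of_mem (by simp))
          hfe1 hfe2 hfe3 hne12 hne13 hne23 ?_ ?_ ?_ ?_ hnbI
        · rintro u ⟨-, hu1, hu2⟩; exact Finset.disjoint_left.mp d12 hu1 hu2
        · rintro u ⟨-, hu1, hu3⟩; exact Finset.disjoint_left.mp d13 hu1 hu3
        · rintro u ⟨-, hu2, hu3⟩; exact Finset.disjoint_left.mp d23 hu2 hu3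
        · rintro u ⟨hu1, hu2, -⟩; exact Finset.disjoint_left.mp d12 hu1 hu2
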